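/- arXiv:2011.08620 — 3 statements merged into one kernel-verified Lean document; each statement's English description precedes it below -/
import Mathlib

section
/- If price and weather index are ψ-independent, i.e. ψ_{pw} = ψ_p ψ_w^T, then M_pw = 0, and assuming the n×n matrix K_p obtained by stacking M̂_pp (M_pp with its last row deleted) on top of φ_p^T and the m×m matrix K_w obtained by stacking M̂_ww (M_ww with its last row deleted) on top of φ_w^T are both invertible, for every a > 0 the unique optimal solution of the hedging problem is given blockwise by x_P = K_p^{-1} · (ĉ_p + (1/(2a))(ψ̂_p − φ̂_p), 0) and x_W = K_w^{-1} · (ĉ_w + (1/(2a))(ψ̂_w − φ̂_w), 0), where ĉ_p, ψ̂_p, φ̂_p (resp. ĉ_w, ψ̂_w, φ̂_w) drop the last entry of c_p, ψ_p, φ_p (resp. c_w, ψ_w, φ_w). -/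
open Finset Matrix

lemma sum_swap3 {α β γ : Type*} [Fintype α] [Fintype β] [Fintype γ] (f : α → β → γ → ℝ) :
    ∑ i, ∑ k, ∑ j, f i k j = ∑ j, ∑ i, ∑ k, f i k j := by
  calc ∑ i, ∑ k, ∑ j, f i k j = ∑ i, ∑ j, ∑ k, f i k j :=
        Finset.sum_congr rfl (fun i _ => Finset.sum_comm)
    _ = ∑ j, ∑ i, ∑ k, f i k j := Finset.sum_comm

lemma Msum {N : ℕ} (μ v : Fin N → ℝ) (s : Fin N) :
    ∑ t, ((if s = t then μ s else 0) - μ s * μ t) * v t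
      = μ s * v s - μ s * (∑ t, μ t * v t) := by
  have e : ∀ t, ((if s = t then μ s else 0) - μ s * μ t) * v t
      = (if s = t then μ s * v t else 0) - μ s * (μ t * v t) := by
    intro t; by_cases h : s = t <;> simp [h] <;> ring
  rw [Finset.sum_congr rfl (fun t _ => e t), Finset.sum_sub_distrib,
    Finset.sum_ite_eq, ← Finset.mul_sum]
  simp

lemma quad_diff {N : ℕ} (a : ℝ) (ha : a ≠ 0) (μ φv c : Fin N → ℝ) (hμ1 : ∑ i, μ i = 1)
    (cx x : Fin N → ℝ)
    (hrow : ∀ i, μ i * cx i - μ i * (∑ t, μ t * cx t) = c i + (1/(2*a)) * (μ i - φv i))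
    (hcf : ∑ i, φv i * cx i = 0) (hxf : ∑ i, φv i * x i = 0) :
    ((∑ i, μ i * cx i) + 2*a*(∑ i, c i * cx i)
        - a * ((∑ i, μ i * cx i ^ 2) - (∑ i, μ i * cx i)^2))
    - ((∑ i, μ i * x i) + 2*a*(∑ i, c i * x i)
        - a * ((∑ i, μ i * x i ^ 2) - (∑ i, μ i * x i)^2))
    = a * ∑ i, μ i * ((x i - cx i) - ((∑ t, μ t * x t) - (∑ t, μ t * cx t)))^2 := by
  have key : ∀ v : Fin N → ℝ, ∑ i, c i * v i
      = (∑ i, μ i * (cx i * v i)) - (∑ t, μ t * cx t) * (∑ i, μ i * v i)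
        - (1/(2*a)) * ((∑ i, μ i * v i) - (∑ i, φv i * v i)) := by
    intro v
    have e : ∀ i, c i * v i = μ i * (cx i * v i) - (∑ t, μ t * cx t) * (μ i * v i)
        - (1/(2*a)) * (μ i * v i - φv i * v i) := by
      intro i
      have h := hrow i
      have hc : c i = μ i * cx i - μ i * (∑ t, μ t * cx t) - (1/(2*a)) * (μ i - φv i) := by
        linarith
      rw [hc]; ring
    rw [Finset.sum_congr rfl (fun i _ => e i), Finset.sum_sub_distrib, Finset.sum_sub_distrib,
      ← Finset.mul_sum, ← Finset.mul_sum, Finset.sum_sub_distrib]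
  have h1 := key x
  have h2 := key cx
  have e2 : ∀ i, μ i * (cx i * cx i) = μ i * cx i ^ 2 := fun i => by ring
  rw [Finset.sum_congr rfl (fun i (_ : i ∈ Finset.univ) => e2 i)] at h2
  have expand : ∑ i, μ i * ((x i - cx i) - ((∑ t, μ t * x t) - (∑ t, μ t * cx t)))^2
      = (∑ i, μ i * x i ^ 2) - 2*(∑ i, μ i * (cx i * x i)) + (∑ i, μ i * cx i ^ 2)
        - 2*((∑ t, μ t * x t) - (∑ t, μ t * cx t)) * ((∑ i, μ i * x i) - (∑ i, μ i * cx i))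
        + ((∑ t, μ t * x t) - (∑ t, μ t * cx t))^2 * (∑ i, μ i) := by
    have e : ∀ i, μ i * ((x i - cx i) - ((∑ t, μ t * x t) - (∑ t, μ t * cx t)))^2
        = μ i * x i ^ 2 - 2*(μ i * (cx i * x i)) + μ i * cx i ^ 2
          - 2*((∑ t, μ t * x t) - (∑ t, μ t * cx t)) * (μ i * x i - μ i * cx i)
          + ((∑ t, μ t * x t) - (∑ t, μ t * cx t))^2 * μ i := by
      intro i; ring
    rw [Finset.sum_congr rfl (fun i _ => e i)]
    rw [Finset.sum_add_distrib, Finset.sum_sub_distrib, Finset.sum_add_distrib,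
      Finset.sum_sub_distrib, ← Finset.mul_sum, ← Finset.mul_sum, ← Finset.mul_sum,
      Finset.sum_sub_distrib]
  rw [expand, h1, h2, hxf, hcf, hμ1]
  field_simp
  ring

theorem stmt_16 (n m l : ℕ) (hl : 1 ≤ l)
    (p : Fin (n+1) → ℝ) (q : Fin l → ℝ) (w : Fin (m+1) → ℝ)
    (ψ : Fin (n+1) → Fin l → Fin (m+1) → ℝ)
    (hψ0 : ∀ i k j, 0 ≤ ψ i k j)
    (hψ1 : ∑ i, ∑ k, ∑ j, ψ i k j = 1)
    (ψp : Fin (n+1) → ℝ) (hψp : ∀ i, ψp i = ∑ k, ∑ j, ψ i k j)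
    (ψw : Fin (m+1) → ℝ) (hψw : ∀ j, ψw j = ∑ i, ∑ k, ψ i k j)
    (ψpw : Matrix (Fin (n+1)) (Fin (m+1)) ℝ) (hψpw : ∀ i j, ψpw i j = ∑ k, ψ i k j)
    (r : ℝ) (y : Fin (n+1) → Fin l → ℝ) (hy : ∀ i k, y i k = (r - p i) * q k)
    (μy : ℝ) (hμy : μy = ∑ i, ∑ k, ∑ j, ψ i k j * y i k)
    (σy2 : ℝ) (hσy2 : σy2 = ∑ i, ∑ k, ∑ j, ψ i k j * (y i k - μy)^2)
    (vp : Fin (n+1) → ℝ) (hvp : ∀ i, vp i = ∑ k, ∑ j, ψ i k j * y i k)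
    (vw : Fin (m+1) → ℝ) (hvw : ∀ j, vw j = ∑ i, ∑ k, ψ i k j * y i k)
    (cp : Fin (n+1) → ℝ) (hcp : ∀ i, cp i = μy * ψp i - vp i)
    (cw : Fin (m+1) → ℝ) (hcw : ∀ j, cw j = μy * ψw j - vw j)
    (Mpp : Matrix (Fin (n+1)) (Fin (n+1)) ℝ)
    (hMpp : ∀ i i', Mpp i i' = (if i = i' then ψp i else 0) - ψp i * ψp i')
    (Mww : Matrix (Fin (m+1)) (Fin (m+1)) ℝ)
    (hMww : ∀ j j', Mww j j' = (if j = j' then ψw j else 0) - ψw j * ψw j')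
    (Mpw : Matrix (Fin (n+1)) (Fin (m+1)) ℝ)
    (hMpw : ∀ i j, Mpw i j = ψpw i j - ψp i * ψw j)
    (φ : Fin (n+1) → Fin (m+1) → ℝ)
    (hφ0 : ∀ i j, 0 ≤ φ i j) (hφ1 : ∑ i, ∑ j, φ i j = 1)
    (φp : Fin (n+1) → ℝ) (hφp : ∀ i, φp i = ∑ j, φ i j)
    (φw : Fin (m+1) → ℝ) (hφw : ∀ j, φw j = ∑ i, φ i j)
    (Kp : Matrix (Fin n ⊕ Fin 1) (Fin (n+1)) ℝ)
    (hKpM : ∀ (i : Fin n) t, Kp (Sum.inl i) t = Mpp i.castSucc t)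
    (hKpφ : ∀ (u : Fin 1) t, Kp (Sum.inr u) t = φp t)
    (Kp' : Matrix (Fin (n+1)) (Fin n ⊕ Fin 1) ℝ)
    (hKpKp' : Kp * Kp' = 1) (hKp'Kp : Kp' * Kp = 1)
    (Kw : Matrix (Fin m ⊕ Fin 1) (Fin (m+1)) ℝ)
    (hKwM : ∀ (j : Fin m) t, Kw (Sum.inl j) t = Mww j.castSucc t)
    (hKwφ : ∀ (u : Fin 1) t, Kw (Sum.inr u) t = φw t)
    (Kw' : Matrix (Fin (m+1)) (Fin m ⊕ Fin 1) ℝ)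
    (hKwKw' : Kw * Kw' = 1) (hKw'Kw : Kw' * Kw = 1)
    (F : ℝ → (Fin (n+1) → ℝ) → (Fin (m+1) → ℝ) → ℝ)
    (hF : ∀ (a : ℝ) (xP : Fin (n+1) → ℝ) (xW : Fin (m+1) → ℝ), F a xP xW =
      (∑ i, ∑ k, ∑ j, ψ i k j * (y i k + xP i + xW j)) -
      a * (∑ i, ∑ k, ∑ j, ψ i k j *
        (y i k + xP i + xW j - ∑ i', ∑ k', ∑ j', ψ i' k' j' * (y i' k' + xP i' + xW j'))^2))
    (hind : ∀ i j, ψpw i j = ψp i * ψw j) :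
    (∀ i j, Mpw i j = 0) ∧
    (∀ a : ℝ, 0 < a →
      ∀ (cxP : Fin (n+1) → ℝ) (cxW : Fin (m+1) → ℝ),
      cxP = Kp'.mulVec (Sum.elim
        (fun i : Fin n => cp i.castSucc + (1/(2*a)) * (ψp i.castSucc - φp i.castSucc))
        (fun _ => 0)) →
      cxW = Kw'.mulVec (Sum.elim
        (fun j : Fin m => cw j.castSucc + (1/(2*a)) * (ψw j.castSucc - φw j.castSucc))
        (fun _ => 0)) →
      (((∑ i, φp i * cxP i) = 0 ∧ (∑ j, φw j * cxW j) = 0 ∧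
        ∀ (xP : Fin (n+1) → ℝ) (xW : Fin (m+1) → ℝ),
          (∑ i, φp i * xP i) = 0 → (∑ j, φw j * xW j) = 0 → F a xP xW ≤ F a cxP cxW) ∧
       ∀ (xP : Fin (n+1) → ℝ) (xW : Fin (m+1) → ℝ),
         (∑ i, φp i * xP i) = 0 → (∑ j, φw j * xW j) = 0 →
         (∀ (xP' : Fin (n+1) → ℝ) (xW' : Fin (m+1) → ℝ),
           (∑ i, φp i * xP' i) = 0 → (∑ j, φw j * xW' j) = 0 → F a xP' xW' ≤ F a xP xW) →
         xP = cxP ∧ xW = cxW)) := by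
  -- basic facts
  have hSψp : ∑ i, ψp i = 1 := by
    rw [Finset.sum_congr rfl (fun i _ => hψp i)]; exact hψ1
  have hSψw : ∑ j, ψw j = 1 := by
    rw [Finset.sum_congr rfl (fun j _ => hψw j)]; rw [← sum_swap3 ψ]; exact hψ1
  have hSφp : ∑ i, φp i = 1 := by
    rw [Finset.sum_congr rfl (fun i _ => hφp i)]; exact hφ1
  have hSφw : ∑ j, φw j = 1 := by
    rw [Finset.sum_congr rfl (fun j _ => hφw j)]; rw [Finset.sum_comm]; exact hφ1
  have hψp0 : ∀ i, 0 ≤ ψp i := fun i => by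
    rw [hψp]; exact Finset.sum_nonneg fun k _ => Finset.sum_nonneg fun j _ => hψ0 i k j
  have hψw0 : ∀ j, 0 ≤ ψw j := fun j => by
    rw [hψw]; exact Finset.sum_nonneg fun i _ => Finset.sum_nonneg fun k _ => hψ0 i k j
  have hvp_sum : ∑ i, vp i = μy := by
    rw [Finset.sum_congr rfl (fun i _ => hvp i)]; exact hμy.symm
  have hvw_sum : ∑ j, vw j = μy := by
    rw [Finset.sum_congr rfl (fun j _ => hvw j), ← sum_swap3 (fun i k j => ψ i k j * y i k)]
    exact hμy.symm
  have hcp_sum : ∑ i, cp i = 0 := by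
    rw [Finset.sum_congr rfl (fun i _ => hcp i), Finset.sum_sub_distrib, ← Finset.mul_sum,
      hSψp, hvp_sum]; ring
  have hcw_sum : ∑ j, cw j = 0 := by
    rw [Finset.sum_congr rfl (fun j _ => hcw j), Finset.sum_sub_distrib, ← Finset.mul_sum,
      hSψw, hvw_sum]; ring
  -- generic triple-sum pieces
  have piece2 : ∀ g : Fin (n+1) → ℝ,
      (∑ i, ∑ k, ∑ j, ψ i k j * g i) = ∑ i, ψp i * g i := by
    intro g
    refine Finset.sum_congr rfl fun i _ => ?_
    rw [hψp i, Finset.sum_mul]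
    exact Finset.sum_congr rfl fun k _ => (Finset.sum_mul _ _ _).symm
  have piece3 : ∀ g : Fin (m+1) → ℝ,
      (∑ i, ∑ k, ∑ j, ψ i k j * g j) = ∑ j, ψw j * g j := by
    intro g
    rw [sum_swap3]
    refine Finset.sum_congr rfl fun j _ => ?_
    rw [hψw j, Finset.sum_mul]
    exact Finset.sum_congr rfl fun i _ => (Finset.sum_mul _ _ _).symm
  have innerP : ∀ i, (∑ k, ∑ j, ψ i k j * (y i k - μy)) = - cp i := by
    intro i
    have e : ∀ (k : Fin l) (j : Fin (m+1)),
        ψ i k j * (y i k - μy) = ψ i k j * y i k - μy * ψ i k j := fun k j => by ring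
    rw [Finset.sum_congr rfl (fun k _ => Finset.sum_congr rfl (fun j _ => e k j)),
      Finset.sum_congr rfl (fun k (_ : k ∈ Finset.univ) => Finset.sum_sub_distrib _ _),
      Finset.sum_sub_distrib, ← hvp]
    have : ∑ k, ∑ j, μy * ψ i k j = μy * ψp i := by
      simp only [← Finset.mul_sum]; rw [← hψp i]
    rw [this, hcp]; ring
  have innerW : ∀ j, (∑ i, ∑ k, ψ i k j * (y i k - μy)) = - cw j := by
    intro j
    have e : ∀ (i : Fin (n+1)) (k : Fin l),
        ψ i k j * (y i k - μy) = ψ i k j * y i k - μy * ψ i k j := fun i k => by ring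
    rw [Finset.sum_congr rfl (fun i _ => Finset.sum_congr rfl (fun k _ => e i k)),
      Finset.sum_congr rfl (fun i (_ : i ∈ Finset.univ) => Finset.sum_sub_distrib _ _),
      Finset.sum_sub_distrib, ← hvw]
    have : ∑ i, ∑ k, μy * ψ i k j = μy * ψw j := by
      simp only [← Finset.mul_sum]; rw [← hψw j]
    rw [this, hcw]; ring
  have pieceA : ∀ g : Fin (n+1) → ℝ,
      (∑ i, ∑ k, ∑ j, ψ i k j * ((y i k - μy) * g i)) = ∑ i, (- cp i) * g i := by
    intro g
    refine Finset.sum_congr rfl fun i _ => ?_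
    have e : ∀ (k : Fin l) (j : Fin (m+1)),
        ψ i k j * ((y i k - μy) * g i) = (ψ i k j * (y i k - μy)) * g i := fun k j => by ring
    rw [Finset.sum_congr rfl (fun k _ => Finset.sum_congr rfl (fun j _ => e k j)),
      Finset.sum_congr rfl (fun k (_ : k ∈ Finset.univ) => (Finset.sum_mul _ _ _).symm),
      ← Finset.sum_mul, innerP i]
  have pieceB : ∀ g : Fin (m+1) → ℝ,
      (∑ i, ∑ k, ∑ j, ψ i k j * ((y i k - μy) * g j)) = ∑ j, (- cw j) * g j := by
    intro g
    rw [sum_swap3]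
    refine Finset.sum_congr rfl fun j _ => ?_
    have e : ∀ (i : Fin (n+1)) (k : Fin l),
        ψ i k j * ((y i k - μy) * g j) = (ψ i k j * (y i k - μy)) * g j := fun i k => by ring
    rw [Finset.sum_congr rfl (fun i _ => Finset.sum_congr rfl (fun k _ => e i k)),
      Finset.sum_congr rfl (fun i (_ : i ∈ Finset.univ) => (Finset.sum_mul _ _ _).symm),
      ← Finset.sum_mul, innerW j]
  have pieceC : ∀ (g : Fin (n+1) → ℝ) (h : Fin (m+1) → ℝ),
      (∑ i, ∑ k, ∑ j, ψ i k j * (g i * h j))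
        = (∑ i, ψp i * g i) * (∑ j, ψw j * h j) := by
    intro g h
    have step1 : ∀ i, (∑ k, ∑ j, ψ i k j * (g i * h j))
        = ∑ j, (ψp i * g i) * (ψw j * h j) := by
      intro i
      rw [Finset.sum_comm]
      refine Finset.sum_congr rfl fun j _ => ?_
      have : ∑ k, ψ i k j * (g i * h j) = (∑ k, ψ i k j) * (g i * h j) :=
        (Finset.sum_mul _ _ _).symm
      rw [this, ← hψpw i j, hind i j]; ring
    rw [Finset.sum_congr rfl (fun i _ => step1 i), Finset.sum_mul]
    exact Finset.sum_congr rfl fun i _ => (Finset.mul_sum _ _ _).symm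
  refine ⟨fun i j => by rw [hMpw, hind]; ring, ?_⟩
  intro a ha cxP cxW hcxP hcxW
  have ha' : a ≠ 0 := ne_of_gt ha
  -- separation of F
  have hFsep : ∀ (xP : Fin (n+1) → ℝ) (xW : Fin (m+1) → ℝ),
      F a xP xW = (μy - a * σy2)
        + ((∑ i, ψp i * xP i) + 2*a*(∑ i, cp i * xP i)
            - a * ((∑ i, ψp i * xP i ^ 2) - (∑ i, ψp i * xP i)^2))
        + ((∑ j, ψw j * xW j) + 2*a*(∑ j, cw j * xW j)
            - a * ((∑ j, ψw j * xW j ^ 2) - (∑ j, ψw j * xW j)^2)) := by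
    intro xP xW
    have hmean : (∑ i, ∑ k, ∑ j, ψ i k j * (y i k + xP i + xW j))
        = μy + (∑ i, ψp i * xP i) + (∑ j, ψw j * xW j) := by
      have e : ∀ (i : Fin (n+1)) (k : Fin l) (j : Fin (m+1)),
          ψ i k j * (y i k + xP i + xW j)
            = ψ i k j * y i k + ψ i k j * xP i + ψ i k j * xW j := fun i k j => by ring
      simp only [e, Finset.sum_add_distrib]
      rw [← hμy, piece2 xP, piece3 xW]
    have h2s : (∑ i, ∑ k, ∑ j, ψ i k j * ((xP i - ∑ i', ψp i' * xP i')^2))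
        = (∑ i, ψp i * xP i ^ 2) - (∑ i, ψp i * xP i)^2 := by
      rw [piece2 (fun i => (xP i - ∑ i', ψp i' * xP i')^2)]
      have e : ∀ i, ψp i * (xP i - ∑ i', ψp i' * xP i')^2
          = ψp i * xP i ^ 2 - 2*(∑ i', ψp i' * xP i')*(ψp i * xP i)
            + (∑ i', ψp i' * xP i')^2 * ψp i := fun i => by ring
      rw [Finset.sum_congr rfl (fun i _ => e i), Finset.sum_add_distrib,
        Finset.sum_sub_distrib, ← Finset.mul_sum, ← Finset.mul_sum, hSψp]
      ring
    have h3s : (∑ i, ∑ k, ∑ j, ψ i k j * ((xW j - ∑ j', ψw j' * xW j')^2))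
        = (∑ j, ψw j * xW j ^ 2) - (∑ j, ψw j * xW j)^2 := by
      rw [piece3 (fun j => (xW j - ∑ j', ψw j' * xW j')^2)]
      have e : ∀ j, ψw j * (xW j - ∑ j', ψw j' * xW j')^2
          = ψw j * xW j ^ 2 - 2*(∑ j', ψw j' * xW j')*(ψw j * xW j)
            + (∑ j', ψw j' * xW j')^2 * ψw j := fun j => by ring
      rw [Finset.sum_congr rfl (fun j _ => e j), Finset.sum_add_distrib,
        Finset.sum_sub_distrib, ← Finset.mul_sum, ← Finset.mul_sum, hSψw]
      ring
    have h4s : (∑ i, ∑ k, ∑ j, ψ i k j * ((y i k - μy) * (2*(xP i - ∑ i', ψp i' * xP i'))))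
        = - 2 * (∑ i, cp i * xP i) := by
      rw [pieceA (fun i => 2*(xP i - ∑ i', ψp i' * xP i'))]
      have e : ∀ i, (- cp i) * (2*(xP i - ∑ i', ψp i' * xP i'))
          = (-2) * (cp i * xP i) + (2 * (∑ i', ψp i' * xP i')) * cp i := fun i => by ring
      rw [Finset.sum_congr rfl (fun i _ => e i), Finset.sum_add_distrib,
        ← Finset.mul_sum, ← Finset.mul_sum, hcp_sum]
      ring
    have h5s : (∑ i, ∑ k, ∑ j, ψ i k j * ((y i k - μy) * (2*(xW j - ∑ j', ψw j' * xW j'))))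
        = - 2 * (∑ j, cw j * xW j) := by
      rw [pieceB (fun j => 2*(xW j - ∑ j', ψw j' * xW j'))]
      have e : ∀ j, (- cw j) * (2*(xW j - ∑ j', ψw j' * xW j'))
          = (-2) * (cw j * xW j) + (2 * (∑ j', ψw j' * xW j')) * cw j := fun j => by ring
      rw [Finset.sum_congr rfl (fun j _ => e j), Finset.sum_add_distrib,
        ← Finset.mul_sum, ← Finset.mul_sum, hcw_sum]
      ring
    have h6s : (∑ i, ∑ k, ∑ j, ψ i k j *
          ((xP i - ∑ i', ψp i' * xP i') * (2*(xW j - ∑ j', ψw j' * xW j')))) = 0 := by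
      rw [pieceC (fun i => xP i - ∑ i', ψp i' * xP i')
        (fun j => 2*(xW j - ∑ j', ψw j' * xW j'))]
      have hz : ∑ i, ψp i * (xP i - ∑ i', ψp i' * xP i') = 0 := by
        have e : ∀ i, ψp i * (xP i - ∑ i', ψp i' * xP i')
            = ψp i * xP i - (∑ i', ψp i' * xP i') * ψp i := fun i => by ring
        rw [Finset.sum_congr rfl (fun i _ => e i), Finset.sum_sub_distrib,
          ← Finset.mul_sum, hSψp]
        ring
      rw [hz, zero_mul]
    have hvarx : (∑ i, ∑ k, ∑ j, ψ i k j * (y i k + xP i + xW j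
          - (μy + (∑ i, ψp i * xP i) + (∑ j, ψw j * xW j)))^2)
        = σy2 + ((∑ i, ψp i * xP i ^ 2) - (∑ i, ψp i * xP i)^2)
          + ((∑ j, ψw j * xW j ^ 2) - (∑ j, ψw j * xW j)^2)
          - 2*(∑ i, cp i * xP i) - 2*(∑ j, cw j * xW j) := by
      have e : ∀ (i : Fin (n+1)) (k : Fin l) (j : Fin (m+1)),
          ψ i k j * (y i k + xP i + xW j
            - (μy + (∑ i, ψp i * xP i) + (∑ j, ψw j * xW j)))^2
          = ψ i k j * (y i k - μy)^2
            + ψ i k j * ((xP i - ∑ i', ψp i' * xP i')^2)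
            + ψ i k j * ((xW j - ∑ j', ψw j' * xW j')^2)
            + ψ i k j * ((y i k - μy) * (2*(xP i - ∑ i', ψp i' * xP i')))
            + ψ i k j * ((y i k - μy) * (2*(xW j - ∑ j', ψw j' * xW j')))
            + ψ i k j * ((xP i - ∑ i', ψp i' * xP i')
                * (2*(xW j - ∑ j', ψw j' * xW j'))) := fun i k j => by ring
      simp only [e, Finset.sum_add_distrib]
      rw [← hσy2, h2s, h3s, h4s, h5s, h6s]
      ring
    rw [hF, hmean, hvarx]
    ring
  -- candidate properties, P side
  have hKbP : Kp.mulVec cxP = Sum.elim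
      (fun i : Fin n => cp i.castSucc + (1/(2*a)) * (ψp i.castSucc - φp i.castSucc))
      (fun _ => 0) := by
    rw [hcxP, Matrix.mulVec_mulVec, hKpKp', Matrix.one_mulVec]
  have hfeasP : ∑ i, φp i * cxP i = 0 := by
    have h := congrFun hKbP (Sum.inr 0)
    simpa [Matrix.mulVec, dotProduct, hKpφ] using h
  have hrowP' : ∀ i : Fin n,
      ψp i.castSucc * cxP i.castSucc - ψp i.castSucc * (∑ t, ψp t * cxP t)
        = cp i.castSucc + (1/(2*a)) * (ψp i.castSucc - φp i.castSucc) := by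
    intro i
    have h := congrFun hKbP (Sum.inl i)
    simp only [Matrix.mulVec, dotProduct, Sum.elim_inl] at h
    rw [Finset.sum_congr rfl (fun t _ => by rw [hKpM i t, hMpp]), Msum ψp cxP] at h
    exact h
  have hrowP : ∀ i, ψp i * cxP i - ψp i * (∑ t, ψp t * cxP t)
      = cp i + (1/(2*a)) * (ψp i - φp i) := by
    have hsumL : ∑ i, (ψp i * cxP i - ψp i * (∑ t, ψp t * cxP t)) = 0 := by
      rw [Finset.sum_sub_distrib, ← Finset.sum_mul, hSψp]; ring
    have hsumR : ∑ i, (cp i + (1/(2*a)) * (ψp i - φp i)) = 0 := by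
      rw [Finset.sum_add_distrib, hcp_sum, ← Finset.mul_sum, Finset.sum_sub_distrib,
        hSψp, hSφp]; ring
    set L : Fin (n+1) → ℝ := fun i =>
      (ψp i * cxP i - ψp i * (∑ t, ψp t * cxP t))
        - (cp i + (1/(2*a)) * (ψp i - φp i)) with hLdef
    have hLcast : ∀ i : Fin n, L i.castSucc = 0 := by
      intro i; simp only [hLdef]; rw [hrowP' i]; ring
    have hLsum : ∑ i, L i = 0 := by
      simp only [hLdef]; rw [Finset.sum_sub_distrib, hsumL, hsumR]; ring
    have hLlast : L (Fin.last n) = 0 := by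
      have h := Fin.sum_univ_castSucc (f := L)
      rw [hLsum] at h
      have : ∑ i : Fin n, L i.castSucc = 0 :=
        Finset.sum_eq_zero fun i _ => hLcast i
      rw [this] at h; linarith
    intro i
    have hLi : L i = 0 := by
      induction i using Fin.lastCases with
      | last => exact hLlast
      | cast i => exact hLcast i
    have := hLi
    simp only [hLdef] at this
    linarith
  -- candidate properties, W side
  have hKbW : Kw.mulVec cxW = Sum.elim
      (fun j : Fin m => cw j.castSucc + (1/(2*a)) * (ψw j.castSucc - φw j.castSucc))
      (fun _ => 0) := by
    rw [hcxW, Matrix.mulVec_mulVec, hKwKw', Matrix.one_mulVec]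
  have hfeasW : ∑ j, φw j * cxW j = 0 := by
    have h := congrFun hKbW (Sum.inr 0)
    simpa [Matrix.mulVec, dotProduct, hKwφ] using h
  have hrowW' : ∀ j : Fin m,
      ψw j.castSucc * cxW j.castSucc - ψw j.castSucc * (∑ t, ψw t * cxW t)
        = cw j.castSucc + (1/(2*a)) * (ψw j.castSucc - φw j.castSucc) := by
    intro j
    have h := congrFun hKbW (Sum.inl j)
    simp only [Matrix.mulVec, dotProduct, Sum.elim_inl] at h
    rw [Finset.sum_congr rfl (fun t _ => by rw [hKwM j t, hMww]), Msum ψw cxW] at h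
    exact h
  have hrowW : ∀ j, ψw j * cxW j - ψw j * (∑ t, ψw t * cxW t)
      = cw j + (1/(2*a)) * (ψw j - φw j) := by
    have hsumL : ∑ j, (ψw j * cxW j - ψw j * (∑ t, ψw t * cxW t)) = 0 := by
      rw [Finset.sum_sub_distrib, ← Finset.sum_mul, hSψw]; ring
    have hsumR : ∑ j, (cw j + (1/(2*a)) * (ψw j - φw j)) = 0 := by
      rw [Finset.sum_add_distrib, hcw_sum, ← Finset.mul_sum, Finset.sum_sub_distrib,
        hSψw, hSφw]; ring
    set L : Fin (m+1) → ℝ := fun j =>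
      (ψw j * cxW j - ψw j * (∑ t, ψw t * cxW t))
        - (cw j + (1/(2*a)) * (ψw j - φw j)) with hLdef
    have hLcast : ∀ j : Fin m, L j.castSucc = 0 := by
      intro j; simp only [hLdef]; rw [hrowW' j]; ring
    have hLsum : ∑ j, L j = 0 := by
      simp only [hLdef]; rw [Finset.sum_sub_distrib, hsumL, hsumR]; ring
    have hLlast : L (Fin.last m) = 0 := by
      have h := Fin.sum_univ_castSucc (f := L)
      rw [hLsum] at h
      have : ∑ j : Fin m, L j.castSucc = 0 :=
        Finset.sum_eq_zero fun j _ => hLcast j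
      rw [this] at h; linarith
    intro j
    have hLj : L j = 0 := by
      induction j using Fin.lastCases with
      | last => exact hLlast
      | cast j => exact hLcast j
    have := hLj
    simp only [hLdef] at this
    linarith
  -- optimality
  have hle : ∀ (xP : Fin (n+1) → ℝ) (xW : Fin (m+1) → ℝ),
      (∑ i, φp i * xP i) = 0 → (∑ j, φw j * xW j) = 0 → F a xP xW ≤ F a cxP cxW := by
    intro xP xW hxP hxW
    have dP := quad_diff a ha' ψp φp cp hSψp cxP xP hrowP hfeasP hxP
    have dW := quad_diff a ha' ψw φw cw hSψw cxW xW hrowW hfeasW hxW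
    have nP : 0 ≤ ∑ i, ψp i * ((xP i - cxP i)
        - ((∑ t, ψp t * xP t) - (∑ t, ψp t * cxP t)))^2 :=
      Finset.sum_nonneg fun i _ => mul_nonneg (hψp0 i) (sq_nonneg _)
    have nW : 0 ≤ ∑ j, ψw j * ((xW j - cxW j)
        - ((∑ t, ψw t * xW t) - (∑ t, ψw t * cxW t)))^2 :=
      Finset.sum_nonneg fun j _ => mul_nonneg (hψw0 j) (sq_nonneg _)
    rw [hFsep xP xW, hFsep cxP cxW]
    linarith [dP, dW, mul_nonneg ha.le nP, mul_nonneg ha.le nW]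
  refine ⟨⟨hfeasP, hfeasW, hle⟩, ?_⟩
  intro xP xW hxP hxW hmax
  have heq : F a xP xW = F a cxP cxW :=
    le_antisymm (hle xP xW hxP hxW) (hmax cxP cxW hfeasP hfeasW)
  have dP := quad_diff a ha' ψp φp cp hSψp cxP xP hrowP hfeasP hxP
  have dW := quad_diff a ha' ψw φw cw hSψw cxW xW hrowW hfeasW hxW
  have nP : 0 ≤ ∑ i, ψp i * ((xP i - cxP i)
      - ((∑ t, ψp t * xP t) - (∑ t, ψp t * cxP t)))^2 :=
    Finset.sum_nonneg fun i _ => mul_nonneg (hψp0 i) (sq_nonneg _)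
  have nW : 0 ≤ ∑ j, ψw j * ((xW j - cxW j)
      - ((∑ t, ψw t * xW t) - (∑ t, ψw t * cxW t)))^2 :=
    Finset.sum_nonneg fun j _ => mul_nonneg (hψw0 j) (sq_nonneg _)
  have heq' : F a xP xW - F a cxP cxW = 0 := by rw [heq]; ring
  rw [hFsep xP xW, hFsep cxP cxW] at heq'
  have hASP : a * (∑ i, ψp i * ((xP i - cxP i)
      - ((∑ t, ψp t * xP t) - (∑ t, ψp t * cxP t)))^2) = 0 := by
    linarith [dP, dW, mul_nonneg ha.le nP, mul_nonneg ha.le nW]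
  have hASW : a * (∑ j, ψw j * ((xW j - cxW j)
      - ((∑ t, ψw t * xW t) - (∑ t, ψw t * cxW t)))^2) = 0 := by
    linarith [dP, dW, mul_nonneg ha.le nP, mul_nonneg ha.le nW]
  have hzeroP : (∑ i, ψp i * ((xP i - cxP i)
      - ((∑ t, ψp t * xP t) - (∑ t, ψp t * cxP t)))^2) = 0 :=
    (mul_eq_zero.mp hASP).resolve_left ha'
  have hzeroW : (∑ j, ψw j * ((xW j - cxW j)
      - ((∑ t, ψw t * xW t) - (∑ t, ψw t * cxW t)))^2) = 0 :=
    (mul_eq_zero.mp hASW).resolve_left ha'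
  -- deduce pointwise vanishing
  have htermP : ∀ i, ψp i * ((xP i - cxP i)
      - ((∑ t, ψp t * xP t) - (∑ t, ψp t * cxP t))) = 0 := by
    intro i
    have h := (Finset.sum_eq_zero_iff_of_nonneg
      (fun i _ => mul_nonneg (hψp0 i) (sq_nonneg _))).mp hzeroP i (Finset.mem_univ i)
    rcases mul_eq_zero.mp h with h0 | h0
    · rw [h0, zero_mul]
    · rw [sq_eq_zero_iff.mp h0, mul_zero]
  have htermW : ∀ j, ψw j * ((xW j - cxW j)
      - ((∑ t, ψw t * xW t) - (∑ t, ψw t * cxW t))) = 0 := by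
    intro j
    have h := (Finset.sum_eq_zero_iff_of_nonneg
      (fun j _ => mul_nonneg (hψw0 j) (sq_nonneg _))).mp hzeroW j (Finset.mem_univ j)
    rcases mul_eq_zero.mp h with h0 | h0
    · rw [h0, zero_mul]
    · rw [sq_eq_zero_iff.mp h0, mul_zero]
  -- from vanishing deduce Kp (xP - cxP) = 0, hence xP = cxP
  constructor
  · have hKD : Kp.mulVec (fun i => xP i - cxP i) = 0 := by
      funext s
      cases s with
      | inl i =>
        simp only [Matrix.mulVec, dotProduct, Pi.zero_apply]
        rw [Finset.sum_congr rfl (fun t _ => by rw [hKpM i t, hMpp]),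
          Msum ψp (fun i => xP i - cxP i)]
        have hsplit : ∑ t, ψp t * (xP t - cxP t)
            = (∑ t, ψp t * xP t) - (∑ t, ψp t * cxP t) := by
          rw [Finset.sum_congr rfl (fun t (_ : t ∈ Finset.univ) =>
            mul_sub (ψp t) (xP t) (cxP t)), Finset.sum_sub_distrib]
        rw [hsplit]
        have h := htermP i.castSucc
        linarith [h, mul_sub (ψp i.castSucc) (xP i.castSucc - cxP i.castSucc)
          ((∑ t, ψp t * xP t) - (∑ t, ψp t * cxP t))]
      | inr u =>
        simp only [Matrix.mulVec, dotProduct, Pi.zero_apply]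
        rw [Finset.sum_congr rfl (fun t _ => by rw [hKpφ u t])]
        rw [Finset.sum_congr rfl (fun t (_ : t ∈ Finset.univ) =>
          mul_sub (φp t) (xP t) (cxP t)), Finset.sum_sub_distrib, hxP, hfeasP]
        ring
    have hD : (fun i => xP i - cxP i) = 0 := by
      have h : Kp'.mulVec (Kp.mulVec (fun i => xP i - cxP i))
          = (fun i => xP i - cxP i) := by
        rw [Matrix.mulVec_mulVec, hKp'Kp, Matrix.one_mulVec]
      rw [hKD, Matrix.mulVec_zero] at h
      exact h.symm
    funext i
    have := congrFun hD i
    simp only [Pi.zero_apply] at this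
    linarith
  · have hKD : Kw.mulVec (fun j => xW j - cxW j) = 0 := by
      funext s
      cases s with
      | inl j =>
        simp only [Matrix.mulVec, dotProduct, Pi.zero_apply]
        rw [Finset.sum_congr rfl (fun t _ => by rw [hKwM j t, hMww]),
          Msum ψw (fun j => xW j - cxW j)]
        have hsplit : ∑ t, ψw t * (xW t - cxW t)
            = (∑ t, ψw t * xW t) - (∑ t, ψw t * cxW t) := by
          rw [Finset.sum_congr rfl (fun t (_ : t ∈ Finset.univ) =>
            mul_sub (ψw t) (xW t) (cxW t)), Finset.sum_sub_distrib]
        rw [hsplit]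
        have h := htermW j.castSucc
        linarith [h, mul_sub (ψw j.castSucc) (xW j.castSucc - cxW j.castSucc)
          ((∑ t, ψw t * xW t) - (∑ t, ψw t * cxW t))]
      | inr u =>
        simp only [Matrix.mulVec, dotProduct, Pi.zero_apply]
        rw [Finset.sum_congr rfl (fun t _ => by rw [hKwφ u t])]
        rw [Finset.sum_congr rfl (fun t (_ : t ∈ Finset.univ) =>
          mul_sub (φw t) (xW t) (cxW t)), Finset.sum_sub_distrib, hxW, hfeasW]
        ring
    have hD : (fun j => xW j - cxW j) = 0 := by
      have h : Kw'.mulVec (Kw.mulVec (fun j => xW j - cxW j))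
          = (fun j => xW j - cxW j) := by
        rw [Matrix.mulVec_mulVec, hKw'Kw, Matrix.one_mulVec]
      rw [hKD, Matrix.mulVec_zero] at h
      exact h.symm
    funext j
    have := congrFun hD j
    simp only [Pi.zero_apply] at this
    linarith
end

section
/- Separation under independence: if ψ_{pw} = ψ_p ψ_w^T, then for any a > 0 a pair (x_P, x_W) is an optimal solution of the joint hedging problem if and only if x_P maximizes G_p(x) = (ψ_p + 2a c_p)^T x − a x^T M_pp x over {x ∈ ℝ^n : φ_p^T x = 0} and x_W maximizes G_w(x) = (ψ_w + 2a c_w)^T x − a x^T M_ww x over {x ∈ ℝ^m : φ_w^T x = 0}. -/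
open Finset Matrix

theorem aux_swap3 {α β γ : Type*} [Fintype α] [Fintype β] [Fintype γ] (h : α → β → γ → ℝ) :
    ∑ i, ∑ k, ∑ j, h i k j = ∑ j, ∑ i, ∑ k, h i k j := by
  have h1 : ∀ i, ∑ k, ∑ j, h i k j = ∑ j, ∑ k, h i k j := fun i => Finset.sum_comm
  simp_rw [h1]
  exact Finset.sum_comm

theorem aux_quad {n : ℕ} (ψp : Fin n → ℝ) (Mpp : Matrix (Fin n) (Fin n) ℝ)
    (hMpp : ∀ i i', Mpp i i' = (if i = i' then ψp i else 0) - ψp i * ψp i')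
    (u : Fin n → ℝ) :
    u ⬝ᵥ Mpp.mulVec u = (∑ i, ψp i * (u i * u i)) - (∑ i, ψp i * u i)^2 := by
  have point : ∀ i i', u i * (Mpp i i' * u i')
      = (if i = i' then ψp i * (u i * u i') else 0) - (ψp i * u i) * (ψp i' * u i') := by
    intro i i'
    rw [hMpp]
    split_ifs with h
    · subst h; ring
    · ring
  simp only [dotProduct, Matrix.mulVec, Finset.mul_sum]
  simp_rw [point, Finset.sum_sub_distrib, Finset.sum_ite_eq, Finset.mem_univ, if_true,
    ← Finset.mul_sum, ← Finset.sum_mul, sq]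

theorem stmt_17 (n m l : ℕ) (hn : 1 ≤ n) (hm : 1 ≤ m) (hl : 1 ≤ l)
    (p : Fin n → ℝ) (q : Fin l → ℝ) (w : Fin m → ℝ)
    (ψ : Fin n → Fin l → Fin m → ℝ)
    (hψ0 : ∀ i k j, 0 ≤ ψ i k j)
    (hψ1 : ∑ i, ∑ k, ∑ j, ψ i k j = 1)
    (ψp : Fin n → ℝ) (hψp : ∀ i, ψp i = ∑ k, ∑ j, ψ i k j)
    (ψw : Fin m → ℝ) (hψw : ∀ j, ψw j = ∑ i, ∑ k, ψ i k j)
    (ψpw : Matrix (Fin n) (Fin m) ℝ) (hψpw : ∀ i j, ψpw i j = ∑ k, ψ i k j)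
    (r : ℝ) (y : Fin n → Fin l → ℝ) (hy : ∀ i k, y i k = (r - p i) * q k)
    (μy : ℝ) (hμy : μy = ∑ i, ∑ k, ∑ j, ψ i k j * y i k)
    (vp : Fin n → ℝ) (hvp : ∀ i, vp i = ∑ k, ∑ j, ψ i k j * y i k)
    (vw : Fin m → ℝ) (hvw : ∀ j, vw j = ∑ i, ∑ k, ψ i k j * y i k)
    (cp : Fin n → ℝ) (hcp : ∀ i, cp i = μy * ψp i - vp i)
    (cw : Fin m → ℝ) (hcw : ∀ j, cw j = μy * ψw j - vw j)
    (Mpp : Matrix (Fin n) (Fin n) ℝ)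
    (hMpp : ∀ i i', Mpp i i' = (if i = i' then ψp i else 0) - ψp i * ψp i')
    (Mww : Matrix (Fin m) (Fin m) ℝ)
    (hMww : ∀ j j', Mww j j' = (if j = j' then ψw j else 0) - ψw j * ψw j')
    (φ : Fin n → Fin m → ℝ)
    (hφ0 : ∀ i j, 0 ≤ φ i j) (hφ1 : ∑ i, ∑ j, φ i j = 1)
    (φp : Fin n → ℝ) (hφp : ∀ i, φp i = ∑ j, φ i j)
    (φw : Fin m → ℝ) (hφw : ∀ j, φw j = ∑ i, φ i j)
    (F : ℝ → (Fin n → ℝ) → (Fin m → ℝ) → ℝ)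
    (hF : ∀ (a : ℝ) (xP : Fin n → ℝ) (xW : Fin m → ℝ), F a xP xW =
      (∑ i, ∑ k, ∑ j, ψ i k j * (y i k + xP i + xW j)) -
      a * (∑ i, ∑ k, ∑ j, ψ i k j *
        (y i k + xP i + xW j - ∑ i', ∑ k', ∑ j', ψ i' k' j' * (y i' k' + xP i' + xW j'))^2))
    (Gp : ℝ → (Fin n → ℝ) → ℝ)
    (hGp : ∀ (a : ℝ) (x : Fin n → ℝ), Gp a x =
      (∑ i, (ψp i + 2*a*cp i) * x i) - a * (x ⬝ᵥ Mpp.mulVec x))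
    (Gw : ℝ → (Fin m → ℝ) → ℝ)
    (hGw : ∀ (a : ℝ) (x : Fin m → ℝ), Gw a x =
      (∑ j, (ψw j + 2*a*cw j) * x j) - a * (x ⬝ᵥ Mww.mulVec x))
    (hind : ∀ i j, ψpw i j = ψp i * ψw j) :
    ∀ a : ℝ, 0 < a → ∀ (xP : Fin n → ℝ) (xW : Fin m → ℝ),
      ((∑ i, φp i * xP i) = 0 ∧ (∑ j, φw j * xW j) = 0 ∧
        ∀ (xP' : Fin n → ℝ) (xW' : Fin m → ℝ),
          (∑ i, φp i * xP' i) = 0 → (∑ j, φw j * xW' j) = 0 → F a xP' xW' ≤ F a xP xW)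
      ↔ (((∑ i, φp i * xP i) = 0 ∧
            ∀ x : Fin n → ℝ, (∑ i, φp i * x i) = 0 → Gp a x ≤ Gp a xP) ∧
          ((∑ j, φw j * xW j) = 0 ∧
            ∀ x : Fin m → ℝ, (∑ j, φw j * x j) = 0 → Gw a x ≤ Gw a xW)) := by
  intro a ha xP xW
  have key : ∀ (u : Fin n → ℝ) (v : Fin m → ℝ), F a u v =
      (μy - a * ((∑ i, ∑ k, ∑ j, ψ i k j * (y i k)^2) - μy^2)) + Gp a u + Gw a v := by
    intro u v
    have hEP1 : (∑ i, ∑ k, ∑ j, ψ i k j * u i) = ∑ i, ψp i * u i := by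
      simp_rw [← Finset.sum_mul, hψp]
    have hEP2 : (∑ i, ∑ k, ∑ j, ψ i k j * (u i * u i)) = ∑ i, ψp i * (u i * u i) := by
      simp_rw [← Finset.sum_mul, hψp]
    have hEW1 : (∑ i, ∑ k, ∑ j, ψ i k j * v j) = ∑ j, ψw j * v j := by
      rw [aux_swap3]
      simp_rw [← Finset.sum_mul, hψw]
    have hEW2 : (∑ i, ∑ k, ∑ j, ψ i k j * (v j * v j)) = ∑ j, ψw j * (v j * v j) := by
      rw [aux_swap3]
      simp_rw [← Finset.sum_mul, hψw]
    have hEY : (∑ i, ∑ k, ∑ j, ψ i k j * y i k) = μy := hμy.symm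
    have hEYP : (∑ i, ∑ k, ∑ j, ψ i k j * (y i k * u i)) = ∑ i, vp i * u i := by
      have h1 : ∀ i, (∑ k, ∑ j, ψ i k j * (y i k * u i)) = vp i * u i := by
        intro i
        rw [hvp, Finset.sum_mul]
        exact Finset.sum_congr rfl fun k _ => by
          rw [Finset.sum_mul]; exact Finset.sum_congr rfl fun j _ => by ring
      simp_rw [h1]
    have hEYW : (∑ i, ∑ k, ∑ j, ψ i k j * (y i k * v j)) = ∑ j, vw j * v j := by
      rw [aux_swap3]
      have h1 : ∀ j, (∑ i, ∑ k, ψ i k j * (y i k * v j)) = vw j * v j := by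
        intro j
        rw [hvw, Finset.sum_mul]
        exact Finset.sum_congr rfl fun i _ => by
          rw [Finset.sum_mul]; exact Finset.sum_congr rfl fun k _ => by ring
      simp_rw [h1]
    have hEPW : (∑ i, ∑ k, ∑ j, ψ i k j * (u i * v j))
        = (∑ i, ψp i * u i) * (∑ j, ψw j * v j) := by
      have hsw : ∀ i, ∑ k, ∑ j, ψ i k j * (u i * v j) = ∑ j, ∑ k, ψ i k j * (u i * v j) :=
        fun i => Finset.sum_comm
      simp_rw [hsw, ← Finset.sum_mul, ← hψpw, hind, Finset.sum_mul_sum]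
      exact Finset.sum_congr rfl fun i _ => Finset.sum_congr rfl fun j _ => by ring
    have hEC : ∀ c : ℝ, (∑ i, ∑ k, ∑ j, ψ i k j * c) = c := by
      intro c
      simp_rw [← Finset.sum_mul, hψ1, one_mul]
    have hT : (∑ i, ∑ k, ∑ j, ψ i k j * (y i k + u i + v j))
        = μy + (∑ i, ψp i * u i) + (∑ j, ψw j * v j) := by
      have h1 : ∀ i k j, ψ i k j * (y i k + u i + v j)
          = ψ i k j * y i k + ψ i k j * u i + ψ i k j * v j := fun i k j => by ring
      simp_rw [h1, Finset.sum_add_distrib]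
      rw [hEY, hEP1, hEW1]
    have expand : ∀ (c : ℝ) (i : Fin n) (k : Fin l) (j : Fin m),
        ψ i k j * (y i k + u i + v j - c)^2 =
        ψ i k j * (y i k)^2 + ψ i k j * (u i * u i) + ψ i k j * (v j * v j)
          + ψ i k j * c^2
          + 2*(ψ i k j * (y i k * u i)) + 2*(ψ i k j * (y i k * v j))
          + 2*(ψ i k j * (u i * v j))
          - (2*c)*(ψ i k j * y i k) - (2*c)*(ψ i k j * u i) - (2*c)*(ψ i k j * v j) :=
      fun c i k j => by ring
    rw [hF, hGp, hGw, hT]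
    simp_rw [expand, Finset.sum_sub_distrib, Finset.sum_add_distrib, ← Finset.mul_sum]
    rw [hEP1, hEP2, hEW1, hEW2, hEY, hEYP, hEYW, hEPW, hEC,
      aux_quad ψp Mpp hMpp u, aux_quad ψw Mww hMww v]
    have hlinP : ∀ i, (ψp i + 2*a*cp i) * u i
        = ψp i * u i + 2*a*(μy*(ψp i * u i)) - 2*a*(vp i * u i) := by
      intro i; rw [hcp]; ring
    have hlinW : ∀ j, (ψw j + 2*a*cw j) * v j
        = ψw j * v j + 2*a*(μy*(ψw j * v j)) - 2*a*(vw j * v j) := by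
      intro j; rw [hcw]; ring
    simp_rw [hlinP, hlinW, Finset.sum_sub_distrib, Finset.sum_add_distrib, ← Finset.mul_sum]
    ring
  constructor
  · rintro ⟨h1, h2, hmax⟩
    refine ⟨⟨h1, fun x hx => ?_⟩, ⟨h2, fun x hx => ?_⟩⟩
    · have h := hmax x xW hx h2
      rw [key x xW, key xP xW] at h
      linarith
    · have h := hmax xP x h1 hx
      rw [key xP x, key xP xW] at h
      linarith
  · rintro ⟨⟨h1, hP⟩, ⟨h2, hW⟩⟩
    refine ⟨h1, h2, fun xP' xW' hp hw => ?_⟩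
    rw [key xP' xW', key xP xW]
    have hh1 := hP xP' hp
    have hh2 := hW xW' hw
    linarith
end

section
/- Assume ψ_p(i) > 0 for all i, ψ_w(j) > 0 for all j, that φ_p = ψ_p and φ_w = ψ_w, and that price and weather index are ψ-independent, i.e. ψ_{pw} = ψ_p ψ_w^T. Define the conditional means μ_y^p(i) = v_p(i)/ψ_p(i) and μ_y^w(j) = v_w(j)/ψ_w(j). Then for every a > 0 the contingent claims x_P(i) = μ_y − μ_y^p(i) and x_W(j) = μ_y − μ_y^w(j), together with multipliers λ_p = λ_w = 1, satisfy the first-order conditions 2a M x + B(λ_p,λ_w)^T = 2a c + d and B^T x = 0; in particular (x_P, x_W) is an optimal solution of the hedging problem. -/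
open Finset Matrix

theorem stmt_18 (n m l : ℕ) (hn : 1 ≤ n) (hm : 1 ≤ m) (hl : 1 ≤ l)
    (p : Fin n → ℝ) (q : Fin l → ℝ) (w : Fin m → ℝ)
    (ψ : Fin n → Fin l → Fin m → ℝ)
    (hψ0 : ∀ i k j, 0 ≤ ψ i k j)
    (hψ1 : ∑ i, ∑ k, ∑ j, ψ i k j = 1)
    (ψp : Fin n → ℝ) (hψp : ∀ i, ψp i = ∑ k, ∑ j, ψ i k j)
    (ψw : Fin m → ℝ) (hψw : ∀ j, ψw j = ∑ i, ∑ k, ψ i k j)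
    (ψpw : Matrix (Fin n) (Fin m) ℝ) (hψpw : ∀ i j, ψpw i j = ∑ k, ψ i k j)
    (r : ℝ) (y : Fin n → Fin l → ℝ) (hy : ∀ i k, y i k = (r - p i) * q k)
    (μy : ℝ) (hμy : μy = ∑ i, ∑ k, ∑ j, ψ i k j * y i k)
    (vp : Fin n → ℝ) (hvp : ∀ i, vp i = ∑ k, ∑ j, ψ i k j * y i k)
    (vw : Fin m → ℝ) (hvw : ∀ j, vw j = ∑ i, ∑ k, ψ i k j * y i k)
    (cp : Fin n → ℝ) (hcp : ∀ i, cp i = μy * ψp i - vp i)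
    (cw : Fin m → ℝ) (hcw : ∀ j, cw j = μy * ψw j - vw j)
    (M : Matrix (Fin n ⊕ Fin m) (Fin n ⊕ Fin m) ℝ)
    (hMpp : ∀ i i', M (Sum.inl i) (Sum.inl i') = (if i = i' then ψp i else 0) - ψp i * ψp i')
    (hMww : ∀ j j', M (Sum.inr j) (Sum.inr j') = (if j = j' then ψw j else 0) - ψw j * ψw j')
    (hMpw : ∀ i j, M (Sum.inl i) (Sum.inr j) = ψpw i j - ψp i * ψw j)
    (hMwp : ∀ i j, M (Sum.inr j) (Sum.inl i) = ψpw i j - ψp i * ψw j)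
    (φ : Fin n → Fin m → ℝ)
    (hφ0 : ∀ i j, 0 ≤ φ i j) (hφ1 : ∑ i, ∑ j, φ i j = 1)
    (φp : Fin n → ℝ) (hφp : ∀ i, φp i = ∑ j, φ i j)
    (φw : Fin m → ℝ) (hφw : ∀ j, φw j = ∑ i, φ i j)
    (B : Matrix (Fin n ⊕ Fin m) (Fin 2) ℝ)
    (hBp0 : ∀ i, B (Sum.inl i) 0 = φp i) (hBp1 : ∀ i, B (Sum.inl i) 1 = 0)
    (hBw0 : ∀ j, B (Sum.inr j) 0 = 0) (hBw1 : ∀ j, B (Sum.inr j) 1 = φw j)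
    (F : ℝ → (Fin n → ℝ) → (Fin m → ℝ) → ℝ)
    (hF : ∀ (a : ℝ) (xP : Fin n → ℝ) (xW : Fin m → ℝ), F a xP xW =
      (∑ i, ∑ k, ∑ j, ψ i k j * (y i k + xP i + xW j)) -
      a * (∑ i, ∑ k, ∑ j, ψ i k j *
        (y i k + xP i + xW j - ∑ i', ∑ k', ∑ j', ψ i' k' j' * (y i' k' + xP i' + xW j'))^2))
    (hψppos : ∀ i, 0 < ψp i) (hψwpos : ∀ j, 0 < ψw j)
    (hφpψ : φp = ψp) (hφwψ : φw = ψw)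
    (hind : ∀ i j, ψpw i j = ψp i * ψw j)
    (xP : Fin n → ℝ) (hxP : ∀ i, xP i = μy - vp i / ψp i)
    (xW : Fin m → ℝ) (hxW : ∀ j, xW j = μy - vw j / ψw j) :
    ∀ a : ℝ, 0 < a →
      ((2*a) • M.mulVec (Sum.elim xP xW) + B.mulVec ![1, 1]
          = (2*a) • Sum.elim cp cw + Sum.elim ψp ψw) ∧
      B.transpose.mulVec (Sum.elim xP xW) = 0 ∧
      ((∑ i, φp i * xP i) = 0 ∧ (∑ j, φw j * xW j) = 0 ∧
        ∀ (xP' : Fin n → ℝ) (xW' : Fin m → ℝ),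
          (∑ i, φp i * xP' i) = 0 → (∑ j, φw j * xW' j) = 0 → F a xP' xW' ≤ F a xP xW) := by

  have hψpne : ∀ i, ψp i ≠ 0 := fun i => (hψppos i).ne'
  have hψwne : ∀ j, ψw j ≠ 0 := fun j => (hψwpos j).ne'
  have tripswap : ∀ g : Fin n → Fin l → Fin m → ℝ,
      ∑ i, ∑ k, ∑ j, g i k j = ∑ j, ∑ i, ∑ k, g i k j := by
    intro g
    calc ∑ i, ∑ k, ∑ j, g i k j = ∑ i, ∑ j, ∑ k, g i k j :=
          Finset.sum_congr rfl fun i _ => Finset.sum_comm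
      _ = ∑ j, ∑ i, ∑ k, g i k j := Finset.sum_comm
  have sump : ∀ g : Fin n → ℝ, (∑ i, ∑ k, ∑ j, ψ i k j * g i) = ∑ i, ψp i * g i := by
    intro g
    refine Finset.sum_congr rfl fun i _ => ?_
    simp_rw [← Finset.sum_mul, hψp]
  have sumw : ∀ g : Fin m → ℝ, (∑ i, ∑ k, ∑ j, ψ i k j * g j) = ∑ j, ψw j * g j := by
    intro g
    rw [tripswap (fun i k j => ψ i k j * g j)]
    refine Finset.sum_congr rfl fun j _ => ?_
    simp_rw [← Finset.sum_mul, hψw]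
  have hsψp : ∑ i, ψp i = 1 := by simp_rw [hψp]; exact hψ1
  have hsψw : ∑ j, ψw j = 1 := by
    simp_rw [hψw]; rw [← tripswap ψ]; exact hψ1
  have hvpsum : ∑ i, vp i = μy := by simp_rw [hvp]; exact hμy.symm
  have hvwsum : ∑ j, vw j = μy := by
    simp_rw [hvw]; rw [← tripswap (fun i k j => ψ i k j * y i k)]; exact hμy.symm
  have hpxe : ∀ i, ψp i * xP i = ψp i * μy - vp i := by
    intro i; rw [hxP]; field_simp [hψpne i]
  have hwxe : ∀ j, ψw j * xW j = ψw j * μy - vw j := by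
    intro j; rw [hxW]; field_simp [hψwne j]
  have hxPfeas : ∑ i, ψp i * xP i = 0 := by
    simp_rw [hpxe, Finset.sum_sub_distrib, ← Finset.sum_mul, hsψp, hvpsum]; ring
  have hxWfeas : ∑ j, ψw j * xW j = 0 := by
    simp_rw [hwxe, Finset.sum_sub_distrib, ← Finset.sum_mul, hsψw, hvwsum]; ring
  have hpx : ∀ i, ψp i * xP i = cp i := by
    intro i; rw [hpxe, hcp]; ring
  have hwx : ∀ j, ψw j * xW j = cw j := by
    intro j; rw [hwxe, hcw]; ring
  have hmean : ∀ (g : Fin n → ℝ) (h : Fin m → ℝ), (∑ i, ψp i * g i) = 0 →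
      (∑ j, ψw j * h j) = 0 →
      (∑ i, ∑ k, ∑ j, ψ i k j * (y i k + g i + h j)) = μy := by
    intro g h hg hh
    have e : ∀ (i : Fin n) (k : Fin l) (j : Fin m), ψ i k j * (y i k + g i + h j)
        = ψ i k j * y i k + ψ i k j * g i + ψ i k j * h j := by
      intro i k j; ring
    simp_rw [e, Finset.sum_add_distrib]
    rw [sump g, sumw h, hg, hh, ← hμy]; ring
  have hinner_p : ∀ i, ∑ k, ∑ j, ψ i k j * (y i k + xP i + xW j - μy) = 0 := by
    intro i
    have e : ∀ (k : Fin l) (j : Fin m), ψ i k j * (y i k + xP i + xW j - μy)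
        = ψ i k j * y i k + ψ i k j * xP i + ψ i k j * xW j - ψ i k j * μy := by
      intro k j; ring
    simp_rw [e, Finset.sum_sub_distrib, Finset.sum_add_distrib]
    have e2 : ∑ k, ∑ j, ψ i k j * xP i = ψp i * xP i := by
      simp_rw [← Finset.sum_mul, hψp]
    have e4 : ∑ k, ∑ j, ψ i k j * μy = ψp i * μy := by
      simp_rw [← Finset.sum_mul, hψp]
    have e3 : ∑ k, ∑ j, ψ i k j * xW j = 0 := by
      rw [Finset.sum_comm]
      have : ∀ j, ∑ k, ψ i k j * xW j = ψp i * (ψw j * xW j) := by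
        intro j; rw [← Finset.sum_mul, ← hψpw, hind]; ring
      simp_rw [this]
      rw [← Finset.mul_sum, hxWfeas, mul_zero]
    rw [← hvp, e2, e3, e4, hpxe]; ring
  have hinner_w : ∀ j, ∑ i, ∑ k, ψ i k j * (y i k + xP i + xW j - μy) = 0 := by
    intro j
    have e : ∀ (i : Fin n) (k : Fin l), ψ i k j * (y i k + xP i + xW j - μy)
        = ψ i k j * y i k + ψ i k j * xW j + ψ i k j * xP i - ψ i k j * μy := by
      intro i k; ring
    simp_rw [e, Finset.sum_sub_distrib, Finset.sum_add_distrib]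
    have e2 : ∑ i, ∑ k, ψ i k j * xW j = ψw j * xW j := by
      simp_rw [← Finset.sum_mul, hψw]
    have e4 : ∑ i, ∑ k, ψ i k j * μy = ψw j * μy := by
      simp_rw [← Finset.sum_mul, hψw]
    have e3 : ∑ i, ∑ k, ψ i k j * xP i = 0 := by
      have : ∀ i, ∑ k, ψ i k j * xP i = ψw j * (ψp i * xP i) := by
        intro i; rw [← Finset.sum_mul, ← hψpw, hind]; ring
      simp_rw [this]
      rw [← Finset.mul_sum, hxPfeas, mul_zero]
    rw [← hvw, e2, e3, e4, hwxe]; ring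
  intro a ha
  refine ⟨?_, ?_, ?_, ?_, ?_⟩
  · funext x
    cases x with
    | inl i =>
      have hMsum1 : ∑ i', M (Sum.inl i) (Sum.inl i') * xP i' = cp i := by
        have e : ∀ i', M (Sum.inl i) (Sum.inl i') * xP i'
            = (if i = i' then ψp i * xP i' else 0) - ψp i * (ψp i' * xP i') := by
          intro i'; rw [hMpp]; split_ifs <;> ring
        simp_rw [e, Finset.sum_sub_distrib, Finset.sum_ite_eq, ← Finset.mul_sum]
        simp [hxPfeas, hpx i]
      have hMsum2 : ∑ j, M (Sum.inl i) (Sum.inr j) * xW j = 0 := by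
        simp [hMpw, hind]
      simp only [Pi.add_apply, Pi.smul_apply, smul_eq_mul, Matrix.mulVec,
        dotProduct, Fintype.sum_sum_type, Sum.elim_inl, Sum.elim_inr,
        Fin.sum_univ_two, Matrix.cons_val_zero, Matrix.cons_val_one, Matrix.head_cons]
      rw [hMsum1, hMsum2, hBp0, hBp1, hφpψ]; ring
    | inr j =>
      have hMsum1 : ∑ j', M (Sum.inr j) (Sum.inr j') * xW j' = cw j := by
        have e : ∀ j', M (Sum.inr j) (Sum.inr j') * xW j'
            = (if j = j' then ψw j * xW j' else 0) - ψw j * (ψw j' * xW j') := by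
          intro j'; rw [hMww]; split_ifs <;> ring
        simp_rw [e, Finset.sum_sub_distrib, Finset.sum_ite_eq, ← Finset.mul_sum]
        simp [hxWfeas, hwx j]
      have hMsum2 : ∑ i, M (Sum.inr j) (Sum.inl i) * xP i = 0 := by
        simp [hMwp, hind]
      simp only [Pi.add_apply, Pi.smul_apply, smul_eq_mul, Matrix.mulVec,
        dotProduct, Fintype.sum_sum_type, Sum.elim_inl, Sum.elim_inr,
        Fin.sum_univ_two, Matrix.cons_val_zero, Matrix.cons_val_one, Matrix.head_cons]
      rw [hMsum1, hMsum2, hBw0, hBw1, hφwψ]; ring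
  · funext c
    simp only [Matrix.mulVec, dotProduct, Matrix.transpose_apply,
      Fintype.sum_sum_type, Sum.elim_inl, Sum.elim_inr, Pi.zero_apply]
    fin_cases c
    · simp only [Fin.zero_eta, Fin.isValue, hBp0, hBw0, hφpψ, zero_mul,
        Finset.sum_const_zero, add_zero]
      exact hxPfeas
    · simp only [Fin.mk_one, Fin.isValue, hBp1, hBw1, hφwψ, zero_mul,
        Finset.sum_const_zero, zero_add]
      exact hxWfeas
  · rw [hφpψ]; exact hxPfeas
  · rw [hφwψ]; exact hxWfeas
  · intro xP' xW' hP' hW'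
    rw [hφpψ] at hP'
    rw [hφwψ] at hW'
    have hmean' := hmean xP' xW' hP' hW'
    have hmean0 := hmean xP xW hxPfeas hxWfeas
    rw [hF, hF, hmean', hmean0]
    have hCu : ∑ i, ∑ k, ∑ j, ψ i k j * (y i k + xP i + xW j - μy) * (xP' i - xP i) = 0 := by
      refine Finset.sum_eq_zero fun i _ => ?_
      simp_rw [← Finset.sum_mul]
      rw [hinner_p i, zero_mul]
    have hCv : ∑ i, ∑ k, ∑ j, ψ i k j * (y i k + xP i + xW j - μy) * (xW' j - xW j) = 0 := by
      rw [tripswap (fun i k j => ψ i k j * (y i k + xP i + xW j - μy) * (xW' j - xW j))]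
      refine Finset.sum_eq_zero fun j _ => ?_
      simp_rw [← Finset.sum_mul]
      rw [hinner_w j, zero_mul]
    have hQ : (0:ℝ) ≤ ∑ i, ∑ k, ∑ j, ψ i k j * ((xP' i - xP i) + (xW' j - xW j))^2 :=
      Finset.sum_nonneg fun i _ => Finset.sum_nonneg fun k _ =>
        Finset.sum_nonneg fun j _ => mul_nonneg (hψ0 i k j) (sq_nonneg _)
    have key : ∀ (i : Fin n) (k : Fin l) (j : Fin m),
        ψ i k j * (y i k + xP' i + xW' j - μy)^2
        = ψ i k j * (y i k + xP i + xW j - μy)^2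
          + 2 * (ψ i k j * (y i k + xP i + xW j - μy) * (xP' i - xP i))
          + 2 * (ψ i k j * (y i k + xP i + xW j - μy) * (xW' j - xW j))
          + ψ i k j * ((xP' i - xP i) + (xW' j - xW j))^2 := by
      intro i k j; ring
    have hexp : (∑ i, ∑ k, ∑ j, ψ i k j * (y i k + xP' i + xW' j - μy)^2)
        = (∑ i, ∑ k, ∑ j, ψ i k j * (y i k + xP i + xW j - μy)^2)
          + 2 * (∑ i, ∑ k, ∑ j, ψ i k j * (y i k + xP i + xW j - μy) * (xP' i - xP i))
          + 2 * (∑ i, ∑ k, ∑ j, ψ i k j * (y i k + xP i + xW j - μy) * (xW' j - xW j))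
          + (∑ i, ∑ k, ∑ j, ψ i k j * ((xP' i - xP i) + (xW' j - xW j))^2) := by
      simp_rw [key, Finset.sum_add_distrib, Finset.mul_sum]
    have hTT : (∑ i, ∑ k, ∑ j, ψ i k j * (y i k + xP i + xW j - μy)^2)
        ≤ ∑ i, ∑ k, ∑ j, ψ i k j * (y i k + xP' i + xW' j - μy)^2 := by
      rw [hexp, hCu, hCv]; linarith
    nlinarith [mul_le_mul_of_nonneg_left hTT ha.le]
end
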